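/- There exists an infinite 3-ample simplicial complex K containing a cycle of length 4 (a 4-cycle subcomplex of the 1-skeleton) whose fundamental class is nontrivial in the first homology group H_1(K); in particular K is not simply connected. -/

import Mathlib

open Finset
open scoped Classical

/-- An abstract simplicial complex on vertex type `V`: a downward-closed family of
nonempty finite subsets of `V`. -/
structure SComplex (V : Type*) where
  faces : Set (Finset V)
  not_empty_mem : ∅ ∉ faces
  down_closed : ∀ {s t : Finset V}, s ∈ faces → t ⊆ s → t.Nonempty → t ∈ faces

namespace SComplex

variable {V W : Type*}

/-- The vertex set of a simplicial complex. -/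
def vertexSet (K : SComplex V) : Set V := {v | {v} ∈ K.faces}

/-- The geometric realization of a simplicial complex, as the set of convex-combination
coordinate functions supported on a simplex. -/
def realization (K : SComplex V) : Set (V → ℝ) :=
  {x | ∃ σ ∈ K.faces, (∀ v, 0 ≤ x v) ∧ (∀ v, v ∉ σ → x v = 0) ∧ (∑ v ∈ σ, x v) = 1}

/-- The geometric realization as a topological space. -/
abbrev space (K : SComplex V) : Type _ := ↥(K.realization)

/-- `L` is a subcomplex of `K`. -/
def IsSubcomplex (L K : SComplex V) : Prop := L.faces ⊆ K.faces

/-- A complex is `r`-conic (`r` an integer, possibly `-1`) if every subcomplex with at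
most `r` vertices is contained in the closed star of some vertex. -/
def IsConic (K : SComplex V) (r : ℤ) : Prop :=
  ∀ L : SComplex V, L.IsSubcomplex K → L.vertexSet.Finite →
    (L.vertexSet.ncard : ℤ) ≤ r →
    ∃ v ∈ K.vertexSet, ∀ σ ∈ L.faces, insert v σ ∈ K.faces

/-- The link of a vertex `v` in `K`. -/
def vertexLink (K : SComplex V) (v : V) : Set (Finset V) :=
  {τ ∈ K.faces | v ∉ τ ∧ insert v τ ∈ K.faces}

/-- A nonempty complex is `r`-ample if for every set `U` of at most `r` vertices and
every subcomplex `L` with vertices in `U`, some vertex `v` has a link whose simplices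
contained in `U` are exactly those of `L`. -/
def IsAmple (K : SComplex V) (r : ℕ) : Prop :=
  K.faces.Nonempty ∧
  ∀ U : Finset V, ↑U ⊆ K.vertexSet → U.card ≤ r →
    ∀ L : SComplex V, L.IsSubcomplex K → L.vertexSet ⊆ ↑U →
      ∃ v ∈ K.vertexSet, {τ ∈ K.vertexLink v | ↑τ ⊆ (U : Set V)} = L.faces

end SComplex

/-- A topological space is `n`-connected if it is nonempty and every continuous map
from the `k`-sphere, `0 ≤ k ≤ n`, is null-homotopic. -/
def NConnected (n : ℕ) (X : Type*) [TopologicalSpace X] : Prop :=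
  Nonempty X ∧ ∀ k : ℕ, k ≤ n →
    ∀ f : C(Metric.sphere (0 : EuclideanSpace ℝ (Fin (k + 1))) 1, X),
      f.Nullhomotopic

open Finsupp in
/-- The simplicial boundary map `∂₁` on ordered `1`-chains: `∂₁(v, w) = w - v`. -/
noncomputable def bdry1 (V : Type*) : ((V × V) →₀ ℤ) →ₗ[ℤ] (V →₀ ℤ) :=
  Finsupp.linearCombination ℤ (fun e : V × V => single e.2 (1 : ℤ) - single e.1 (1 : ℤ))

open Finsupp in
/-- The simplicial boundary map `∂₂` on ordered `2`-chains:
`∂₂(u, v, w) = (v, w) - (u, w) + (u, v)`. -/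
noncomputable def bdry2 (V : Type*) : ((V × V × V) →₀ ℤ) →ₗ[ℤ] ((V × V) →₀ ℤ) :=
  Finsupp.linearCombination ℤ (fun t : V × V × V =>
    single (t.2.1, t.2.2) (1 : ℤ) - single (t.1, t.2.2) (1 : ℤ) + single (t.1, t.2.1) (1 : ℤ))

/-- Ordered `1`-chains of the complex `K`: finitely supported `ℤ`-combinations of
ordered pairs whose vertex set is a simplex of `K`. -/
noncomputable def chains1 {V : Type*} (K : SComplex V) : Submodule ℤ ((V × V) →₀ ℤ) :=
  Finsupp.supported ℤ ℤ {e : V × V | ({e.1, e.2} : Finset V) ∈ K.faces}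

/-- Ordered `2`-chains of the complex `K`: finitely supported `ℤ`-combinations of
ordered triples whose vertex set is a simplex of `K`. -/
noncomputable def chains2 {V : Type*} (K : SComplex V) : Submodule ℤ ((V × V × V) →₀ ℤ) :=
  Finsupp.supported ℤ ℤ {t : V × V × V | ({t.1, t.2.1, t.2.2} : Finset V) ∈ K.faces}

namespace AmpleC

inductive Vt : Type where
  | base : Fin 4 → Vt
  | cone : List Vt → List (List Vt) → Vt

open Vt

inductive IsFace : Finset Vt → Prop where
  | basevert (i : Fin 4) : IsFace {base i}
  | baseedge (i : Fin 4) : IsFace {base i, base (i+1)}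
  | conevert (u : List Vt) (f : List (List Vt))
      (hnd : u.Nodup) (hlen : u.length ≤ 3)
      (hf : ∀ σ ∈ f.map List.toFinset, IsFace σ)
      (hfu : ∀ σ ∈ f.map List.toFinset, ∀ x ∈ σ, x ∈ u)
      (hfd : ∀ σ ∈ f.map List.toFinset, ∀ τ ⊆ σ, τ.Nonempty → τ ∈ f.map List.toFinset) :
      IsFace {cone u f}
  | coneface (u : List Vt) (f : List (List Vt))
      (hnd : u.Nodup) (hlen : u.length ≤ 3)
      (hf : ∀ σ ∈ f.map List.toFinset, IsFace σ)
      (hfu : ∀ σ ∈ f.map List.toFinset, ∀ x ∈ σ, x ∈ u)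
      (hfd : ∀ σ ∈ f.map List.toFinset, ∀ τ ⊆ σ, τ.Nonempty → τ ∈ f.map List.toFinset)
      (σ : Finset Vt) (hσ : σ ∈ f.map List.toFinset) :
      IsFace (insert (cone u f) σ)

lemma mem_u_sizeOf {x : Vt} {u : List Vt} {f : List (List Vt)} (hx : x ∈ u) :
    sizeOf x < sizeOf (cone u f) := by
  have := List.sizeOf_lt_of_mem hx
  simp only [Vt.cone.sizeOf_spec]
  omega

lemma not_self_mem_u {u : List Vt} {f : List (List Vt)} : cone u f ∉ u := by
  intro h
  exact absurd (mem_u_sizeOf (f := f) h) (lt_irrefl _)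

lemma isFace_nonempty {σ : Finset Vt} (h : IsFace σ) : σ.Nonempty := by
  cases h <;> simp [Finset.insert_nonempty]

lemma isFace_down {σ τ : Finset Vt} (h : IsFace σ) (hsub : τ ⊆ σ) (hne : τ.Nonempty) :
    IsFace τ := by
  induction h with
  | basevert i =>
      have : τ = {base i} := Finset.eq_singleton_iff_nonempty_unique_mem.2
        ⟨hne, fun x hx => Finset.mem_singleton.1 (hsub hx)⟩
      exact this ▸ IsFace.basevert i
  | baseedge i =>
      by_cases h1 : base i ∈ τ <;> by_cases h2 : base (i+1) ∈ τ
      · have : τ = {base i, base (i+1)} := by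
          apply Finset.Subset.antisymm hsub
          intro x hx; simp at hx; rcases hx with rfl | rfl <;> assumption
        exact this ▸ IsFace.baseedge i
      · have : τ = {base i} := by
          apply Finset.eq_singleton_iff_nonempty_unique_mem.2
          refine ⟨hne, fun x hx => ?_⟩
          have := hsub hx; simp at this
          rcases this with rfl | rfl
          · rfl
          · exact absurd hx h2
        exact this ▸ IsFace.basevert i
      · have : τ = {base (i+1)} := by
          apply Finset.eq_singleton_iff_nonempty_unique_mem.2
          refine ⟨hne, fun x hx => ?_⟩
          have := hsub hx; simp at this
          rcases this with rfl | rfl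
          · exact absurd hx h1
          · rfl
        exact this ▸ IsFace.basevert (i+1)
      · obtain ⟨x, hx⟩ := hne
        have := hsub hx; simp at this
        rcases this with rfl | rfl
        · exact absurd hx h1
        · exact absurd hx h2
  | conevert u f hnd hlen hf hfu hfd ih =>
      have : τ = {cone u f} := Finset.eq_singleton_iff_nonempty_unique_mem.2
        ⟨hne, fun x hx => Finset.mem_singleton.1 (hsub hx)⟩
      exact this ▸ IsFace.conevert u f hnd hlen hf hfu hfd
  | coneface u f hnd hlen hf hfu hfd σ' hσ' ih =>
      by_cases hw : cone u f ∈ τ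
      · by_cases he : (τ.erase (cone u f)).Nonempty
        · have hsub' : τ.erase (cone u f) ⊆ σ' := by
            intro x hx
            have hx1 := Finset.mem_of_mem_erase hx
            have hx2 := Finset.ne_of_mem_erase hx
            have := hsub hx1
            rcases Finset.mem_insert.1 this with h | h
            · exact absurd h hx2
            · exact h
          have hτ' : τ.erase (cone u f) ∈ f.map List.toFinset := hfd σ' hσ' _ hsub' he
          have : τ = insert (cone u f) (τ.erase (cone u f)) := by
            rw [Finset.insert_erase hw]
          exact this ▸ IsFace.coneface u f hnd hlen hf hfu hfd _ hτ'
        · have : τ = {cone u f} := by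
            apply Finset.eq_singleton_iff_nonempty_unique_mem.2
            refine ⟨hne, fun x hx => ?_⟩
            by_contra hxx
            exact he ⟨x, Finset.mem_erase.2 ⟨hxx, hx⟩⟩
          exact this ▸ IsFace.conevert u f hnd hlen hf hfu hfd
      · have hsub' : τ ⊆ σ' := by
          intro x hx
          rcases Finset.mem_insert.1 (hsub hx) with h | h
          · exact absurd (h ▸ hx) hw
          · exact h
        exact hf _ (hfd σ' hσ' _ hsub' hne)

noncomputable def K : SComplex Vt where
  faces := {σ | IsFace σ}
  not_empty_mem := fun h => by simpa using isFace_nonempty h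
  down_closed := fun h hsub hne => isFace_down h hsub hne


def Valid (u : List Vt) (f : List (List Vt)) : Prop :=
  u.Nodup ∧ u.length ≤ 3 ∧ (∀ σ ∈ f.map List.toFinset, IsFace σ) ∧
  (∀ σ ∈ f.map List.toFinset, ∀ x ∈ σ, x ∈ u) ∧
  (∀ σ ∈ f.map List.toFinset, ∀ τ ⊆ σ, τ.Nonempty → τ ∈ f.map List.toFinset)

lemma conevert' {u f} (h : Valid u f) : IsFace {cone u f} :=
  IsFace.conevert u f h.1 h.2.1 h.2.2.1 h.2.2.2.1 h.2.2.2.2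

lemma coneface' {u f σ} (h : Valid u f) (hσ : σ ∈ f.map List.toFinset) :
    IsFace (insert (cone u f) σ) :=
  IsFace.coneface u f h.1 h.2.1 h.2.2.1 h.2.2.2.1 h.2.2.2.2 σ hσ

lemma face_cases {s : Finset Vt} (h : IsFace s) :
    (∃ i : Fin 4, s = {base i}) ∨ (∃ i : Fin 4, s = {base i, base (i+1)}) ∨
    (∃ u f, Valid u f ∧ s = {cone u f}) ∨
    (∃ u f σ, Valid u f ∧ σ ∈ f.map List.toFinset ∧ s = insert (cone u f) σ) := by
  cases h with
  | basevert i => exact Or.inl ⟨i, rfl⟩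
  | baseedge i => exact Or.inr (Or.inl ⟨i, rfl⟩)
  | conevert u f hnd hlen hf hfu hfd =>
      exact Or.inr (Or.inr (Or.inl ⟨u, f, ⟨hnd, hlen, hf, hfu, hfd⟩, rfl⟩))
  | coneface u f hnd hlen hf hfu hfd σ hσ =>
      exact Or.inr (Or.inr (Or.inr ⟨u, f, σ, ⟨hnd, hlen, hf, hfu, hfd⟩, hσ, rfl⟩))

/-- an infinite family of vertices -/
def t : ℕ → Vt
  | 0 => cone [base 0] []
  | (n+1) => cone [t n] []

lemma t_mem_vertexSet (n : ℕ) : t n ∈ K.vertexSet := by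
  cases n <;>
  exact IsFace.conevert _ [] (by simp) (by simp) (by simp) (by simp) (by simp)

lemma t_injective : Function.Injective t := by
  have hmono : ∀ n, sizeOf (t n) < sizeOf (t (n+1)) := fun n =>
    mem_u_sizeOf (f := []) (by simp [t])
  have : StrictMono (fun n => sizeOf (t n)) := strictMono_nat_of_lt_succ hmono
  intro a b hab
  exact this.injective (by simp [hab])

lemma vertexSet_infinite : K.vertexSet.Infinite :=
  Set.infinite_of_injective_forall_mem t_injective t_mem_vertexSet

lemma ample3 : K.IsAmple 3 := by
  refine ⟨⟨{base 0}, IsFace.basevert 0⟩, ?_⟩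
  intro U hU hcard L hLK hLU
  have hfacesub : ∀ σ ∈ L.faces, ∀ x ∈ σ, x ∈ U := by
    intro σ hσ x hx
    have : {x} ∈ L.faces := L.down_closed hσ (Finset.singleton_subset_iff.2 hx) ⟨x, by simp⟩
    exact hLU this
  have hLfin : L.faces.Finite := by
    apply Set.Finite.subset (U.powerset : Finset (Finset Vt)).finite_toSet
    intro σ hσ
    simp only [Finset.coe_powerset, Set.mem_preimage, Set.mem_powerset_iff,
      Finset.coe_subset, Finset.mem_coe, Finset.mem_powerset]
    exact fun x hx => hfacesub σ hσ x hx
  set f : List (List Vt) := hLfin.toFinset.toList.map Finset.toList with hf_def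
  have hmem : ∀ σ : Finset Vt, σ ∈ f.map List.toFinset ↔ σ ∈ L.faces := by
    intro σ
    simp only [hf_def, List.map_map, List.mem_map, Function.comp_apply,
      Finset.mem_toList, Set.Finite.mem_toFinset, Finset.toList_toFinset]
    constructor
    · rintro ⟨s, hs, rfl⟩; exact hs
    · intro h; exact ⟨σ, h, rfl⟩
  have hval : Valid U.toList f := by
    refine ⟨Finset.nodup_toList U, by simpa using hcard, ?_, ?_, ?_⟩
    · intro σ hσ; exact hLK ((hmem σ).1 hσ)
    · intro σ hσ x hx
      simpa using hfacesub σ ((hmem σ).1 hσ) x hx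
    · intro σ hσ τ hτ hne
      exact (hmem τ).2 (L.down_closed ((hmem σ).1 hσ) hτ hne)
  set v : Vt := cone U.toList f with hv_def
  have hvU : v ∉ U := by
    intro h
    exact absurd (mem_u_sizeOf (f := f) (Finset.mem_toList.2 h)) (by simp [hv_def])
  refine ⟨v, conevert' hval, ?_⟩
  ext τ
  simp only [Set.mem_setOf_eq, SComplex.vertexLink, Set.mem_sep_iff]
  constructor
  · rintro ⟨⟨hτF, hvτ, hins⟩, hτU⟩
    have hτne : τ.Nonempty := isFace_nonempty hτF
    rcases face_cases hins with ⟨i, heq⟩ | ⟨i, heq⟩ | ⟨u', f', hval', heq⟩ |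
      ⟨u', f', σ', hval', hσ', heq⟩
    · have : v ∈ ({base i} : Finset Vt) := heq ▸ Finset.mem_insert_self v τ
      simp [hv_def] at this
    · have : v ∈ ({base i, base (i+1)} : Finset Vt) := heq ▸ Finset.mem_insert_self v τ
      simp [hv_def] at this
    · obtain ⟨x, hx⟩ := hτne
      have : x ∈ ({cone u' f'} : Finset Vt) := heq ▸ Finset.mem_insert_of_mem hx
      have hxv : x = cone u' f' := Finset.mem_singleton.1 this
      have : v ∈ ({cone u' f'} : Finset Vt) := heq ▸ Finset.mem_insert_self v τ
      have hvv : v = cone u' f' := Finset.mem_singleton.1 this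
      exact absurd (hvv ▸ hxv ▸ hx) hvτ
    · set w : Vt := cone u' f' with hw_def
      by_cases hvw : v = w
      · have hu' : u' = U.toList ∧ f' = f := by
          have := hvw.symm
          simp only [hw_def, hv_def, Vt.cone.injEq] at this
          exact ⟨this.1, this.2⟩
        have hτσ : τ ⊆ σ' := by
          intro x hx
          have : x ∈ insert w σ' := heq ▸ Finset.mem_insert_of_mem hx
          rcases Finset.mem_insert.1 this with rfl | h
          · exact absurd hx (hvw ▸ hvτ)
          · exact h
        have hσL : σ' ∈ L.faces := by
          rw [← hmem]
          rw [hu'.2] at hσ'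
          exact hσ'
        exact L.down_closed hσL hτσ hτne
      · exfalso
        have hv_mem : v ∈ insert w σ' := heq ▸ Finset.mem_insert_self v τ
        have hvσ' : v ∈ σ' := by
          rcases Finset.mem_insert.1 hv_mem with h | h
          · exact absurd h hvw
          · exact h
        have hvu' : v ∈ u' := hval'.2.2.2.1 σ' hσ' v hvσ'
        have hw_mem : w ∈ insert v τ := by rw [heq]; exact Finset.mem_insert_self w σ'
        have hwτ : w ∈ τ := by
          rcases Finset.mem_insert.1 hw_mem with h | h
          · exact absurd h.symm hvw
          · exact h
        have hwU : w ∈ U := by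
          have := hτU hwτ; simpa using this
        have h1 : sizeOf w < sizeOf v := by
          have := mem_u_sizeOf (f := f) (Finset.mem_toList.2 hwU)
          simpa [hv_def] using this
        have h2 : sizeOf v < sizeOf w := by
          have := mem_u_sizeOf (f := f') hvu'
          simpa [hw_def] using this
        omega
  · intro hτL
    have hτU : ↑τ ⊆ (U : Set Vt) := by
      intro x hx
      exact hfacesub τ hτL x hx
    have hvτ : v ∉ τ := fun h => hvU (by simpa using hτU h)
    exact ⟨⟨hLK hτL, hvτ, coneface' hval ((hmem τ).2 hτL)⟩, hτU⟩


def E (x y : Vt) : Prop := x ≠ y ∧ IsFace {x, y}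

lemma E_symm {x y : Vt} (h : E x y) : E y x :=
  ⟨h.1.symm, by rw [Finset.pair_comm]; exact h.2⟩

noncomputable def GB (p : Vt → Vt → ℤ) (a b c : Vt) : ℤ :=
  if E a b then p a b else if E a c ∧ E b c then p a c - p b c else 0

noncomputable def GC (p : Vt → Vt → ℤ) (a b c : Vt) : ℤ :=
  if E a c then p a c else if E b c then GB p a b c + p b c else 0

noncomputable def pot (p : Vt → Vt → ℤ) : List Vt → Vt → ℤ
  | [a, b], x => if x = b then (if E a b then p a b else 0) else 0
  | [a, b, c], x => if x = b then GB p a b c else if x = c then GC p a b c else 0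
  | _, _ => 0

lemma pot_congr {p q : Vt → Vt → ℤ} : ∀ {u : List Vt},
    (∀ a ∈ u, ∀ b ∈ u, p a b = q a b) → ∀ x, pot p u x = pot q u x
  | [], _, _ => rfl
  | [a], _, _ => rfl
  | [a, b], h, x => by
      have hab := h a (by simp) b (by simp)
      simp only [pot, hab]
  | [a, b, c], h, x => by
      have hab := h a (by simp) b (by simp)
      have hac := h a (by simp) c (by simp)
      have hbc := h b (by simp) c (by simp)
      simp only [pot, GB, GC, hab, hac, hbc]
  | a :: b :: c :: d :: l, _, _ => rfl

def W (i j : Fin 4) : ℤ :=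
  if i = 3 ∧ j = 0 then 1 else if i = 0 ∧ j = 3 then -1 else 0

noncomputable def Phi : ℕ → Vt → Vt → ℤ
  | 0, _, _ => 0
  | (n+1), x, y =>
    if x = y then 0 else
    match x, y with
    | base i, base j => W i j
    | base i, cone u _ => -(pot (Phi n) u (base i))
    | cone u _, base i => pot (Phi n) u (base i)
    | cone u f, cone u' f' =>
        if sizeOf (cone u f) < sizeOf (cone u' f') then -(pot (Phi n) u' (cone u f))
        else pot (Phi n) u (cone u' f')

lemma vt_sizeOf_pos (x : Vt) : 0 < sizeOf x := by
  cases x <;> simp +arith +decide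

lemma Phi_stab : ∀ n m : ℕ, ∀ x y : Vt, sizeOf x < n → sizeOf y < n →
    sizeOf x < m → sizeOf y < m → Phi n x y = Phi m x y := by
  intro n
  induction n using Nat.strong_induction_on with
  | _ n IH =>
    intro m x y hxn hyn hxm hym
    obtain ⟨n', rfl⟩ : ∃ n', n = n' + 1 :=
      ⟨n - 1, by have := vt_sizeOf_pos x; omega⟩
    obtain ⟨m', rfl⟩ : ∃ m', m = m' + 1 :=
      ⟨m - 1, by have := vt_sizeOf_pos x; omega⟩
    have key : ∀ (u : List Vt) (f : List (List Vt)),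
        (sizeOf (cone u f) < n' + 1) → (sizeOf (cone u f) < m' + 1) →
        ∀ z, pot (Phi n') u z = pot (Phi m') u z := by
      intro u f hn hm z
      apply pot_congr
      intro a ha b hb
      have ha' := mem_u_sizeOf (f := f) ha
      have hb' := mem_u_sizeOf (f := f) hb
      exact IH n' (by omega) m' a b (by omega) (by omega) (by omega) (by omega)
    cases x with
    | base i =>
      cases y with
      | base j => simp only [Phi]
      | cone u f =>
        simp only [Phi]
        rw [key u f hyn hym]
    | cone u f =>
      cases y with
      | base i =>
        simp only [Phi]
        rw [key u f hxn hxm]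
      | cone u' f' =>
        simp only [Phi]
        rw [key u f hxn hxm, key u' f' hyn hym]

noncomputable def phi (x y : Vt) : ℤ :=
  Phi (max (sizeOf x) (sizeOf y) + 1) x y

lemma phi_eq_Phi {x y : Vt} {n : ℕ} (hx : sizeOf x < n) (hy : sizeOf y < n) :
    phi x y = Phi n x y :=
  Phi_stab _ n x y (by simp [Nat.lt_succ_iff]) (by simp [Nat.lt_succ_iff]) hx hy

lemma phi_self (x : Vt) : phi x x = 0 := by
  unfold phi
  cases x <;> simp [Phi]

lemma phi_base_base (i j : Fin 4) : phi (base i) (base j) = W i j := by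
  unfold phi
  by_cases h : i = j
  · subst h
    have : ¬(i = 3 ∧ i = 0) := by rintro ⟨rfl, h⟩; exact absurd h (by decide)
    have h2 : ¬(i = 0 ∧ i = 3) := by rintro ⟨rfl, h⟩; exact absurd h (by decide)
    simp [Phi, W, this, h2]
  · have : base i ≠ base j := by simp [h]
    simp [Phi, this]

lemma pot_phi_congr {u : List Vt} {f : List (List Vt)} {n : ℕ}
    (hn : sizeOf (cone u f) ≤ n) (z : Vt) : pot (Phi n) u z = pot phi u z := by
  apply pot_congr
  intro a ha b hb
  have ha' := mem_u_sizeOf (f := f) ha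
  have hb' := mem_u_sizeOf (f := f) hb
  exact (phi_eq_Phi (by omega) (by omega)).symm

lemma phi_apex_left {u : List Vt} {f : List (List Vt)} {x : Vt} (hx : x ∈ u) :
    phi (cone u f) x = pot phi u x := by
  have hs := mem_u_sizeOf (f := f) hx
  have hne : cone u f ≠ x := by
    intro h; rw [← h] at hs; omega
  rw [phi_eq_Phi (n := sizeOf (cone u f) + 1) (by omega) (by omega)]
  cases x with
  | base i =>
    simp only [Phi, if_neg hne]
    exact pot_phi_congr (le_refl _) _
  | cone u' f' =>
    have hlt : ¬ sizeOf (cone u f) < sizeOf (cone u' f') := by omega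
    simp only [Phi, if_neg hne, if_neg hlt]
    exact pot_phi_congr (le_refl _) _

lemma phi_apex_right {u : List Vt} {f : List (List Vt)} {x : Vt} (hx : x ∈ u) :
    phi x (cone u f) = -(pot phi u x) := by
  have hs := mem_u_sizeOf (f := f) hx
  have hne : x ≠ cone u f := by
    intro h; rw [h] at hs; omega
  rw [phi_eq_Phi (n := sizeOf (cone u f) + 1) (by omega) (by omega)]
  cases x with
  | base i =>
    simp only [Phi, if_neg hne]
    rw [pot_phi_congr (le_refl _)]
  | cone u' f' =>
    have hlt : sizeOf (cone u' f') < sizeOf (cone u f) := hs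
    simp only [Phi, if_neg hne, if_pos hlt]
    rw [pot_phi_congr (le_refl _)]


def Below (a b : Vt) : Prop := ∃ u f, Valid u f ∧ b = cone u f ∧ a ∈ u

lemma below_size {a b : Vt} (h : Below a b) : sizeOf a < sizeOf b := by
  obtain ⟨u, f, _, rfl, ha⟩ := h
  exact mem_u_sizeOf ha

lemma edge_resolve {a b : Vt} (h : E a b) :
    (∃ i j : Fin 4, a = base i ∧ b = base j ∧ (j = i + 1 ∨ i = j + 1)) ∨
    Below a b ∨ Below b a := by
  obtain ⟨hne, hface⟩ := h
  rcases face_cases hface with ⟨i, heq⟩ | ⟨i, heq⟩ | ⟨u, f, hval, heq⟩ |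
    ⟨u, f, σ, hval, hσ, heq⟩
  · exfalso
    have ha : a ∈ ({base i} : Finset Vt) := heq ▸ (by simp)
    have hb : b ∈ ({base i} : Finset Vt) := heq ▸ (by simp)
    simp at ha hb; exact hne (ha.trans hb.symm)
  · have ha : a ∈ ({base i, base (i+1)} : Finset Vt) := heq ▸ (by simp)
    have hb : b ∈ ({base i, base (i+1)} : Finset Vt) := heq ▸ (by simp)
    simp only [Finset.mem_insert, Finset.mem_singleton] at ha hb
    left
    rcases ha with rfl | rfl <;> rcases hb with rfl | rfl
    · exact absurd rfl hne
    · exact ⟨i, i+1, rfl, rfl, Or.inl rfl⟩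
    · exact ⟨i+1, i, rfl, rfl, Or.inr rfl⟩
    · exact absurd rfl hne
  · exfalso
    have ha : a ∈ ({cone u f} : Finset Vt) := heq ▸ (by simp)
    have hb : b ∈ ({cone u f} : Finset Vt) := heq ▸ (by simp)
    simp at ha hb; exact hne (ha.trans hb.symm)
  · have hw : cone u f ∈ ({a, b} : Finset Vt) := heq ▸ Finset.mem_insert_self _ _
    have hsu : ∀ x ∈ σ, x ∈ u := hval.2.2.2.1 σ hσ
    simp only [Finset.mem_insert, Finset.mem_singleton] at hw
    rcases hw with hw | hw
    · -- a is the apex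
      right; right
      have hb : b ∈ insert (cone u f) σ := heq ▸ (by simp)
      rcases Finset.mem_insert.1 hb with h' | h'
      · exact absurd (h'.trans hw).symm hne
      · exact ⟨u, f, hval, hw.symm, hsu b h'⟩
    · right; left
      have ha : a ∈ insert (cone u f) σ := heq ▸ (by simp)
      rcases Finset.mem_insert.1 ha with h' | h'
      · exact absurd (h'.trans hw) hne
      · exact ⟨u, f, hval, hw.symm, hsu a h'⟩

lemma E_base_base {i j : Fin 4} (h : E (base i) (base j)) :
    (j = i + 1 ∨ i = j + 1) ∧ i ≠ j := by
  have hne : i ≠ j := fun hh => h.1 (by rw [hh])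
  rcases edge_resolve h with ⟨i', j', h1, h2, h3⟩ | hb | hb
  · obtain rfl : i = i' := by injection h1
    obtain rfl : j = j' := by injection h2
    exact ⟨h3, hne⟩
  · obtain ⟨u, f, _, heq, _⟩ := hb; exact absurd heq (by simp)
  · obtain ⟨u, f, _, heq, _⟩ := hb; exact absurd heq (by simp)

lemma E_base_cone {i : Fin 4} {u f} (h : E (base i) (cone u f)) :
    Below (base i) (cone u f) := by
  rcases edge_resolve h with ⟨i', j', h1, h2, h3⟩ | hb | hb
  · exact absurd h2 (by simp)
  · exact hb
  · obtain ⟨u', f', _, heq, _⟩ := hb; exact absurd heq (by simp)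

lemma E_cone_cone {u f u' f'} (h : E (cone u f) (cone u' f')) :
    Below (cone u f) (cone u' f') ∨ Below (cone u' f') (cone u f) := by
  rcases edge_resolve h with ⟨i', j', h1, h2, h3⟩ | hb | hb
  · exact absurd h1 (by simp)
  · exact Or.inl hb
  · exact Or.inr hb

lemma below_pair {a b c : Vt} (h1 : Below a c) (h2 : Below b c) :
    ∃ u f, Valid u f ∧ c = cone u f ∧ a ∈ u ∧ b ∈ u := by
  obtain ⟨u, f, hv, rfl, ha⟩ := h1
  obtain ⟨u', f', _, heq, hb⟩ := h2
  rw [Vt.cone.injEq] at heq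
  exact ⟨u, f, hv, rfl, ha, heq.1 ▸ hb⟩

lemma W_antisymm : ∀ i j : Fin 4, W i j = -W j i := by decide

lemma phi_antisymm {x y : Vt} (h : E x y) : phi x y = -phi y x := by
  rcases edge_resolve h with ⟨i, j, rfl, rfl, _⟩ | hb | hb
  · rw [phi_base_base, phi_base_base]; exact W_antisymm i j
  · obtain ⟨u, f, hval, rfl, hm⟩ := hb
    rw [phi_apex_right hm, phi_apex_left hm]
  · obtain ⟨u, f, hval, rfl, hm⟩ := hb
    rw [phi_apex_right hm, phi_apex_left hm]; ring

lemma no_base_triangle : ∀ i j k : Fin 4, i ≠ j → j ≠ k → i ≠ k →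
    (j = i + 1 ∨ i = j + 1) → (k = j + 1 ∨ j = k + 1) → (k = i + 1 ∨ i = k + 1) →
    False := by decide

lemma find_top {x y z : Vt} (hxy : E x y) (hyz : E y z) (hxz : E x z) :
    (∃ u f, Valid u f ∧ z = cone u f ∧ x ∈ u ∧ y ∈ u) ∨
    (∃ u f, Valid u f ∧ y = cone u f ∧ x ∈ u ∧ z ∈ u) ∨
    (∃ u f, Valid u f ∧ x = cone u f ∧ y ∈ u ∧ z ∈ u) := by
  cases x with
  | base i =>
    cases y with
    | base j =>
      cases z with
      | base k =>
        exfalso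
        obtain ⟨a1, n1⟩ := E_base_base hxy
        obtain ⟨a2, n2⟩ := E_base_base hyz
        obtain ⟨a3, n3⟩ := E_base_base hxz
        exact no_base_triangle i j k n1 n2 n3 a1 a2 a3
      | cone u f =>
        exact Or.inl (below_pair (E_base_cone hxz) (E_base_cone hyz))
    | cone uy fy =>
      cases z with
      | base k =>
        exact Or.inr (Or.inl (below_pair (E_base_cone hxy)
          (E_base_cone (E_symm hyz))))
      | cone uz fz =>
        rcases E_cone_cone hyz with hb | hb
        · exact Or.inl (below_pair (E_base_cone hxz) hb)
        · exact Or.inr (Or.inl (below_pair (E_base_cone hxy) hb))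
  | cone ux fx =>
    cases y with
    | base j =>
      cases z with
      | base k =>
        exact Or.inr (Or.inr (below_pair (E_base_cone (E_symm hxy))
          (E_base_cone (E_symm hxz))))
      | cone uz fz =>
        rcases E_cone_cone hxz with hb | hb
        · exact Or.inl (below_pair hb (E_base_cone hyz))
        · exact Or.inr (Or.inr (below_pair (E_base_cone (E_symm hxy)) hb))
    | cone uy fy =>
      cases z with
      | base k =>
        rcases E_cone_cone hxy with hb | hb
        · exact Or.inr (Or.inl (below_pair hb (E_base_cone (E_symm hyz))))
        · exact Or.inr (Or.inr (below_pair hb (E_base_cone (E_symm hxz))))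
      | cone uz fz =>
        rcases E_cone_cone hxy with h1 | h1 <;>
        rcases E_cone_cone hyz with h2 | h2 <;>
        rcases E_cone_cone hxz with h3 | h3
        · exact Or.inl (below_pair h3 h2)
        · exfalso
          have := below_size h1; have := below_size h2; have := below_size h3
          omega
        · exact Or.inr (Or.inl (below_pair h1 h2))
        · exact Or.inr (Or.inl (below_pair h1 h2))
        · exact Or.inl (below_pair h3 h2)
        · exact Or.inr (Or.inr (below_pair h1 h3))
        · exfalso
          have := below_size h1; have := below_size h2; have := below_size h3
          omega
        · exact Or.inr (Or.inr (below_pair h1 h3))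

lemma pot_spec {u : List Vt} (hnd : u.Nodup) (hlen : u.length ≤ 3)
    (htri : ∀ a ∈ u, ∀ b ∈ u, ∀ c ∈ u, E a b → E b c → E a c →
      phi b c - phi a c + phi a b = 0)
    {x y : Vt} (hx : x ∈ u) (hy : y ∈ u) (hE : E x y) :
    pot phi u y - pot phi u x = phi x y := by
  match u with
  | [] => cases hx
  | [a] =>
    simp only [List.mem_singleton] at hx hy
    exact absurd (hx.trans hy.symm) hE.1
  | [a, b] =>
    have hab : a ≠ b := by simp at hnd; exact hnd
    have ea : pot phi [a, b] a = 0 := by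
      simp only [pot]; rw [if_neg hab]
    have eb : pot phi [a, b] b = if E a b then phi a b else 0 := by
      simp only [pot]; simp
    have claim : ∀ x' y' : Vt, x' ∈ [a, b] → y' ∈ [a, b] → E x' y' →
        pot phi [a, b] y' - pot phi [a, b] x' = phi x' y' := by
      intro x' y' hx' hy' hE'
      simp only [List.mem_cons, List.mem_singleton, List.not_mem_nil, or_false] at hx' hy'
      rcases hx' with rfl | rfl <;> rcases hy' with rfl | rfl
      · exact absurd rfl hE'.1
      · rw [ea, eb, if_pos hE']; ring
      · rw [ea, eb, if_pos (E_symm hE'), phi_antisymm hE']; ring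
      · exact absurd rfl hE'.1
    exact claim x y hx hy hE
  | [a, b, c] =>
    have hnd' : a ≠ b ∧ a ≠ c ∧ b ≠ c := by
      simp [List.nodup_cons] at hnd; tauto
    obtain ⟨hab, hac, hbc⟩ := hnd'
    have ha : a ∈ [a, b, c] := by simp
    have hb : b ∈ [a, b, c] := by simp
    have hc : c ∈ [a, b, c] := by simp
    have hpa : pot phi [a, b, c] a = 0 := by
      simp only [pot]; rw [if_neg hab, if_neg hac]
    have hpb : pot phi [a, b, c] b = GB phi a b c := by
      simp only [pot]; simp
    have hpc : pot phi [a, b, c] c = GC phi a b c := by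
      simp only [pot]; rw [if_neg (Ne.symm hbc)]; simp
    have fact1 : E a b → GB phi a b c = phi a b := fun h => by
      rw [GB, if_pos h]
    have fact2 : E a c → GC phi a b c = phi a c := fun h => by
      rw [GC, if_pos h]
    have fact3 : E b c → GC phi a b c - GB phi a b c = phi b c := by
      intro h
      by_cases h1 : E a c
      · rw [fact2 h1]
        by_cases h2 : E a b
        · rw [fact1 h2]
          have := htri a ha b hb c hc h2 h h1
          linarith
        · rw [GB, if_neg h2, if_pos ⟨h1, h⟩]; ring
      · rw [GC, if_neg h1, if_pos h, GB]; ring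
    have claim : ∀ x' y' : Vt, x' ∈ [a, b, c] → y' ∈ [a, b, c] → E x' y' →
        pot phi [a, b, c] y' - pot phi [a, b, c] x' = phi x' y' := by
      intro x' y' hx' hy' hE'
      simp only [List.mem_cons, List.mem_singleton, List.not_mem_nil, or_false] at hx' hy'
      rcases hx' with rfl | rfl | rfl <;> rcases hy' with rfl | rfl | rfl
      · exact absurd rfl hE'.1
      · rw [hpa, hpb, fact1 hE']; ring
      · rw [hpa, hpc, fact2 hE']; ring
      · rw [hpa, hpb, fact1 (E_symm hE'), phi_antisymm hE']; ring
      · exact absurd rfl hE'.1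
      · rw [hpb, hpc, fact3 hE']
      · rw [hpa, hpc, fact2 (E_symm hE'), phi_antisymm hE']; ring
      · have h3 := fact3 (E_symm hE')
        rw [hpb, hpc, phi_antisymm hE']; linarith
      · exact absurd rfl hE'.1
    exact claim x y hx hy hE
  | a :: b :: c :: d :: l => simp at hlen; omega

lemma phi_tri : ∀ n : ℕ, ∀ x y z : Vt, sizeOf x < n → sizeOf y < n → sizeOf z < n →
    E x y → E y z → E x z → phi y z - phi x z + phi x y = 0 := by
  intro n
  induction n using Nat.strong_induction_on with
  | _ n IH =>
  intro x y z hx hy hz hxy hyz hxz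
  have hn : 0 < n := by have := vt_sizeOf_pos x; omega
  rcases find_top hxy hyz hxz with ⟨u, f, hval, rfl, hxu, hyu⟩ |
    ⟨u, f, hval, rfl, hxu, hzu⟩ | ⟨u, f, hval, rfl, hyu, hzu⟩
  · have htri : ∀ a ∈ u, ∀ b ∈ u, ∀ c ∈ u, E a b → E b c → E a c →
        phi b c - phi a c + phi a b = 0 := by
      intro a ha b hb c hc h1 h2 h3
      have ha' := mem_u_sizeOf (f := f) ha
      have hb' := mem_u_sizeOf (f := f) hb
      have hc' := mem_u_sizeOf (f := f) hc
      exact IH (n-1) (by omega) a b c (by omega) (by omega) (by omega) h1 h2 h3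
    have hpot := pot_spec hval.1 hval.2.1 htri hxu hyu hxy
    rw [phi_apex_right hyu, phi_apex_right hxu]
    linarith
  · have htri : ∀ a ∈ u, ∀ b ∈ u, ∀ c ∈ u, E a b → E b c → E a c →
        phi b c - phi a c + phi a b = 0 := by
      intro a ha b hb c hc h1 h2 h3
      have ha' := mem_u_sizeOf (f := f) ha
      have hb' := mem_u_sizeOf (f := f) hb
      have hc' := mem_u_sizeOf (f := f) hc
      exact IH (n-1) (by omega) a b c (by omega) (by omega) (by omega) h1 h2 h3
    have hpot := pot_spec hval.1 hval.2.1 htri hxu hzu hxz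
    rw [phi_apex_left hzu, phi_apex_right hxu]
    linarith
  · have htri : ∀ a ∈ u, ∀ b ∈ u, ∀ c ∈ u, E a b → E b c → E a c →
        phi b c - phi a c + phi a b = 0 := by
      intro a ha b hb c hc h1 h2 h3
      have ha' := mem_u_sizeOf (f := f) ha
      have hb' := mem_u_sizeOf (f := f) hb
      have hc' := mem_u_sizeOf (f := f) hc
      exact IH (n-1) (by omega) a b c (by omega) (by omega) (by omega) h1 h2 h3
    have hpot := pot_spec hval.1 hval.2.1 htri hyu hzu hyz
    rw [phi_apex_left hzu, phi_apex_left hyu]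
    linarith

lemma cocycle {a b c : Vt} (h : IsFace {a, b, c}) :
    phi b c - phi a c + phi a b = 0 := by
  by_cases hab : a = b
  · subst hab; rw [phi_self]; ring
  by_cases hbc : b = c
  · subst hbc; rw [phi_self]; ring
  by_cases hac : a = c
  · subst hac
    have hpair : ({a, b, a} : Finset Vt) = {a, b} := by
      ext t; simp; tauto
    rw [hpair] at h
    rw [phi_self, phi_antisymm ⟨hab, h⟩]; ring
  · have hEab : E a b := ⟨hab, isFace_down h (by intro t ht; simp at ht ⊢; tauto) ⟨a, by simp⟩⟩
    have hEbc : E b c := ⟨hbc, isFace_down h (by intro t ht; simp at ht ⊢; tauto) ⟨b, by simp⟩⟩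
    have hEac : E a c := ⟨hac, isFace_down h (by intro t ht; simp at ht ⊢; tauto) ⟨a, by simp⟩⟩
    exact phi_tri (sizeOf a + sizeOf b + sizeOf c + 1) a b c (by omega) (by omega)
      (by omega) hEab hEbc hEac


lemma base_edge_face (i : Fin 4) : ({base i, base (i+1)} : Finset Vt) ∈ K.faces :=
  IsFace.baseedge i

noncomputable def Phif : ((Vt × Vt) →₀ ℤ) →ₗ[ℤ] ℤ :=
  Finsupp.linearCombination ℤ (fun e : Vt × Vt => phi e.1 e.2)

lemma Phif_boundary {c : ((Vt × Vt × Vt) →₀ ℤ)} (hc : c ∈ chains2 K) :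
    Phif (bdry2 Vt c) = 0 := by
  simp only [chains2, Finsupp.mem_supported] at hc
  rw [bdry2, Finsupp.linearCombination_apply, map_finsuppSum]
  rw [Finsupp.sum]
  apply Finset.sum_eq_zero
  intro t ht
  have hface : ({t.1, t.2.1, t.2.2} : Finset Vt) ∈ K.faces := hc ht
  rw [map_smul, smul_eq_zero]
  right
  have hco := cocycle (a := t.1) (b := t.2.1) (c := t.2.2) hface
  simp only [Phif, map_add, map_sub, Finsupp.linearCombination_single, one_smul]
  linarith

end AmpleC

open AmpleC AmpleC.Vt in
theorem exists_three_ample_with_nontrivial_four_cycle' :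
    ∃ (V : Type) (K : SComplex V) (v₀ v₁ v₂ v₃ : V),
      K.vertexSet.Infinite ∧ K.IsAmple 3 ∧
      (v₀ ≠ v₁ ∧ v₀ ≠ v₂ ∧ v₀ ≠ v₃ ∧ v₁ ≠ v₂ ∧ v₁ ≠ v₃ ∧ v₂ ≠ v₃) ∧
      ({v₀, v₁} : Finset V) ∈ K.faces ∧ ({v₁, v₂} : Finset V) ∈ K.faces ∧
      ({v₂, v₃} : Finset V) ∈ K.faces ∧ ({v₃, v₀} : Finset V) ∈ K.faces ∧
      (Finsupp.single (v₀, v₁) (1 : ℤ) + Finsupp.single (v₁, v₂) 1 + Finsupp.single (v₂, v₃) 1 +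
          Finsupp.single (v₃, v₀) 1) ∈ chains1 K ∧
      bdry1 V (Finsupp.single (v₀, v₁) (1 : ℤ) + Finsupp.single (v₁, v₂) 1 + Finsupp.single (v₂, v₃) 1 +
          Finsupp.single (v₃, v₀) 1) = 0 ∧
      (Finsupp.single (v₀, v₁) (1 : ℤ) + Finsupp.single (v₁, v₂) 1 + Finsupp.single (v₂, v₃) 1 +
          Finsupp.single (v₃, v₀) 1) ∉ Submodule.map (bdry2 V) (chains2 K) := by
  refine ⟨Vt, K, base 0, base 1, base 2, base 3, vertexSet_infinite, ample3,
    ⟨by simp, by simp, by simp, by simp, by simp, by simp⟩, ?_, ?_, ?_, ?_, ?_, ?_, ?_⟩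
  · have := base_edge_face 0; simpa using this
  · have := base_edge_face 1; simpa using this
  · have := base_edge_face 2; simpa using this
  · have := base_edge_face 3; simpa using this
  · refine Submodule.add_mem _ (Submodule.add_mem _ (Submodule.add_mem _ ?_ ?_) ?_) ?_ <;>
      apply Finsupp.single_mem_supported <;> simp only [Set.mem_setOf_eq]
    · have := base_edge_face 0; simpa using this
    · have := base_edge_face 1; simpa using this
    · have := base_edge_face 2; simpa using this
    · have := base_edge_face 3; simpa using this
  · simp only [bdry1, map_add, Finsupp.linearCombination_single, one_smul]
    abel
  · rintro ⟨c, hc, hceq⟩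
    have h0 : Phif (bdry2 Vt c) = 0 := Phif_boundary hc
    rw [hceq] at h0
    have h1 : Phif (Finsupp.single (base 0, base 1) (1 : ℤ) + Finsupp.single (base 1, base 2) 1 +
        Finsupp.single (base 2, base 3) 1 + Finsupp.single (base 3, base 0) 1) = 1 := by
      simp only [Phif, map_add, Finsupp.linearCombination_single, one_smul,
        phi_base_base]
      decide
    rw [h1] at h0
    exact one_ne_zero h0

open Finsupp in
/-- There is an infinite `3`-ample simplicial complex containing a
`4`-cycle whose fundamental class is nontrivial in `H₁`: the corresponding `1`-cycle
is a cycle of the simplicial chain complex of `K` which is not a boundary.  In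
particular `K` is not simply connected. -/
theorem exists_three_ample_with_nontrivial_four_cycle :
    ∃ (V : Type) (K : SComplex V) (v₀ v₁ v₂ v₃ : V),
      K.vertexSet.Infinite ∧ K.IsAmple 3 ∧
      (v₀ ≠ v₁ ∧ v₀ ≠ v₂ ∧ v₀ ≠ v₃ ∧ v₁ ≠ v₂ ∧ v₁ ≠ v₃ ∧ v₂ ≠ v₃) ∧
      ({v₀, v₁} : Finset V) ∈ K.faces ∧ ({v₁, v₂} : Finset V) ∈ K.faces ∧
      ({v₂, v₃} : Finset V) ∈ K.faces ∧ ({v₃, v₀} : Finset V) ∈ K.faces ∧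
      (single (v₀, v₁) (1 : ℤ) + single (v₁, v₂) 1 + single (v₂, v₃) 1 +
          single (v₃, v₀) 1) ∈ chains1 K ∧
      bdry1 V (single (v₀, v₁) (1 : ℤ) + single (v₁, v₂) 1 + single (v₂, v₃) 1 +
          single (v₃, v₀) 1) = 0 ∧
      (single (v₀, v₁) (1 : ℤ) + single (v₁, v₂) 1 + single (v₂, v₃) 1 +
          single (v₃, v₀) 1) ∉ Submodule.map (bdry2 V) (chains2 K) := by
  exact exists_three_ample_with_nontrivial_four_cycle'
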